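/- Instability of the unweighted linear construction: for the weighting ω(p) = y − x (for p = (x,y)) and the sequence of single-point diagrams D_n = {p_n} with p_n = (n^2, n^2 + 1/n) and multiplicity 1, the 1-Wasserstein distance W_1(μ_{D_n}, μ_∅) = 1/(2n) → 0 while the Hausdorff distance d_H(Z_{μ^ω_{D_n}}, Z_{μ^ω_∅}) = d_H((1/n)[0,(1,p_n)], {0}) → ∞. Hence no constant C exists with d_H(Z_{μ^ω_D}, Z_{μ^ω_{D'}}) ≤ C·W_1(μ_D, μ_{D'}) for all diagrams. -/

import Mathlib

open Pointwise MeasureTheory Filter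


/-- Support function of a set in a real inner product space. -/
noncomputable def suppFn {E : Type*} [NormedAddCommGroup E] [InnerProductSpace ℝ E]
    (A : Set E) (x : E) : ℝ :=
  sSup ((fun a => (inner ℝ x a : ℝ)) '' A)

/-- The lift of a planar point `p = (x, y)` to `(1, x, y) ∈ ℝ³` (Euclidean). -/
noncomputable def lift3 (p : ℝ × ℝ) : EuclideanSpace ℝ (Fin 3) := WithLp.toLp 2 ![1, p.1, p.2]

/-- Lift zonoid of a weighted finite set of planar points: the Minkowski sum of the
segments `w p • [0, (1,p)]`. -/
noncomputable def liftZonoid (D : Finset (ℝ × ℝ)) (w : ℝ × ℝ → ℝ) :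
    Set (EuclideanSpace ℝ (Fin 3)) :=
  ∑ p ∈ D, w p • segment ℝ (0 : EuclideanSpace ℝ (Fin 3)) (lift3 p)

/-- Persistence sphere (support function of the lift zonoid, explicit formula). -/
noncomputable def persSphere (D : Finset (ℝ × ℝ)) (w : ℝ × ℝ → ℝ)
    (v : EuclideanSpace ℝ (Fin 3)) : ℝ :=
  ∑ p ∈ D, w p * max 0 (inner ℝ v (lift3 p) : ℝ)

/-- Cost of a partial matching `γ` (defined on `S ⊆ D`, with image in `D'`) between the
diagrams `(D, a)` and `(D', b)`.  Note that the norm on `ℝ × ℝ` is the sup-norm, and the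
distance of `p = (x,y)` to the diagonal is `(y - x)/2`. -/
noncomputable def matchCost (D D' : Finset (ℝ × ℝ)) (a b : ℝ × ℝ → ℕ)
    (S : Finset (ℝ × ℝ)) (γ : ℝ × ℝ → ℝ × ℝ) : ℝ :=
  (∑ p ∈ S, (min (a p) (b (γ p)) : ℝ) * ‖p - γ p‖)
  + (∑ p ∈ S, ((a p : ℝ) - (min (a p) (b (γ p)) : ℝ)) * ((p.2 - p.1) / 2))
  + (∑ p ∈ S, ((b (γ p) : ℝ) - (min (a p) (b (γ p)) : ℝ)) * (((γ p).2 - (γ p).1) / 2))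
  + (∑ p ∈ D \ S, (a p : ℝ) * ((p.2 - p.1) / 2))
  + (∑ q ∈ D' \ S.image γ, (b q : ℝ) * ((q.2 - q.1) / 2))

/-- The 1-Wasserstein distance between persistence diagrams: infimum of matching costs
over all partial matchings. -/
noncomputable def W1 (D D' : Finset (ℝ × ℝ)) (a b : ℝ × ℝ → ℕ) : ℝ :=
  sInf { c : ℝ | ∃ (S : Finset (ℝ × ℝ)) (γ : ℝ × ℝ → ℝ × ℝ),
    S ⊆ D ∧ S.image γ ⊆ D' ∧ Set.InjOn γ ↑S ∧ c = matchCost D D' a b S γ }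

lemma W1_single (n : ℕ) (hn : 1 ≤ n) :
    W1 ({((n : ℝ) ^ 2, (n : ℝ) ^ 2 + 1 / (n : ℝ))} : Finset (ℝ × ℝ)) (∅ : Finset (ℝ × ℝ))
      (fun _ => 1) (fun _ => 1) = 1 / (2 * (n : ℝ)) := by
  have hn' : (0:ℝ) < n := by exact_mod_cast hn
  have hval : ∀ (S : Finset (ℝ × ℝ)) (γ : ℝ × ℝ → ℝ × ℝ),
      S.image γ ⊆ (∅ : Finset (ℝ × ℝ)) →
      matchCost ({((n : ℝ) ^ 2, (n : ℝ) ^ 2 + 1 / (n : ℝ))} : Finset (ℝ × ℝ)) ∅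
        (fun _ => 1) (fun _ => 1) S γ = 1 / (2 * (n : ℝ)) := by
    intro S γ him
    have hS : S = ∅ := Finset.image_eq_empty.mp (Finset.subset_empty.mp him)
    subst hS
    simp [matchCost]
    field_simp

  have hset : { c : ℝ | ∃ (S : Finset (ℝ × ℝ)) (γ : ℝ × ℝ → ℝ × ℝ),
      S ⊆ ({((n : ℝ) ^ 2, (n : ℝ) ^ 2 + 1 / (n : ℝ))} : Finset (ℝ × ℝ)) ∧
      S.image γ ⊆ (∅ : Finset (ℝ × ℝ)) ∧ Set.InjOn γ ↑S ∧
      c = matchCost ({((n : ℝ) ^ 2, (n : ℝ) ^ 2 + 1 / (n : ℝ))} : Finset (ℝ × ℝ)) ∅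
        (fun _ => 1) (fun _ => 1) S γ } = {1 / (2 * (n : ℝ))} := by
    ext c
    constructor
    · rintro ⟨S, γ, _, him, _, rfl⟩
      exact hval S γ him
    · rintro rfl
      exact ⟨∅, id, by simp, by simp, by simp, (hval ∅ id (by simp)).symm⟩
  rw [W1, hset, csInf_singleton]

lemma lift3_norm_ge (p : ℝ × ℝ) : |p.1| ≤ ‖lift3 p‖ := by
  have := EuclideanSpace.norm_eq (lift3 p)
  rw [this]
  have h1 : lift3 p 1 = p.1 := rfl
  calc |p.1| = Real.sqrt (‖lift3 p 1‖ ^ 2) := by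
        rw [h1, Real.sqrt_sq_eq_abs, Real.norm_eq_abs, abs_abs]
    _ ≤ Real.sqrt (∑ i, ‖lift3 p i‖ ^ 2) := by
        apply Real.sqrt_le_sqrt
        exact Finset.single_le_sum (f := fun i => ‖lift3 p i‖ ^ 2)
          (fun i _ => by positivity) (Finset.mem_univ 1)

lemma liftZonoid_empty (w : ℝ × ℝ → ℝ) : liftZonoid ∅ w = {0} := by
  simp [liftZonoid]; rfl

lemma lower_bound (n : ℕ) (hn : 1 ≤ n) :
    (n : ℝ) ≤ Metric.hausdorffDist
      (liftZonoid ({((n : ℝ) ^ 2, (n : ℝ) ^ 2 + 1 / (n : ℝ))} : Finset (ℝ × ℝ))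
        (fun p => (p.2 - p.1) * ((1 : ℕ) : ℝ)))
      (liftZonoid (∅ : Finset (ℝ × ℝ)) (fun p => (p.2 - p.1) * ((1 : ℕ) : ℝ))) := by
  have hn' : (0:ℝ) < n := by exact_mod_cast hn
  set p : ℝ × ℝ := ((n : ℝ) ^ 2, (n : ℝ) ^ 2 + 1 / (n : ℝ))
  set w : ℝ × ℝ → ℝ := fun p => (p.2 - p.1) * ((1 : ℕ) : ℝ)
  have hw : w p = 1 / (n : ℝ) := by simp [w, p]
  have hZ : liftZonoid {p} w = w p • segment ℝ (0 : EuclideanSpace ℝ (Fin 3)) (lift3 p) := by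
    simp [liftZonoid]
  set u : EuclideanSpace ℝ (Fin 3) := w p • lift3 p
  have hu : u ∈ liftZonoid {p} w := by
    rw [hZ]
    exact Set.smul_mem_smul_set (right_mem_segment ℝ _ _)
  -- compactness / boundedness
  have hseg : IsCompact (segment ℝ (0 : EuclideanSpace ℝ (Fin 3)) (lift3 p)) := by
    rw [segment_eq_image]
    exact isCompact_Icc.image (by continuity)
  have hcomp : IsCompact (liftZonoid {p} w) := by
    rw [hZ, ← Set.image_smul]
    exact hseg.image (continuous_const_smul _)
  have hne : (liftZonoid {p} w).Nonempty := ⟨u, hu⟩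
  have hfin : EMetric.hausdorffEdist (liftZonoid {p} w)
      (liftZonoid (∅ : Finset (ℝ × ℝ)) w) ≠ ⊤ := by
    rw [liftZonoid_empty]
    exact Metric.hausdorffEdist_ne_top_of_nonempty_of_bounded hne ⟨0, rfl⟩
      hcomp.isBounded Bornology.isBounded_singleton
  have h1 : Metric.infDist u (liftZonoid (∅ : Finset (ℝ × ℝ)) w)
      ≤ Metric.hausdorffDist (liftZonoid {p} w) (liftZonoid (∅ : Finset (ℝ × ℝ)) w) :=
    Metric.infDist_le_hausdorffDist_of_mem hu hfin
  rw [liftZonoid_empty, Metric.infDist_singleton, dist_zero_right] at h1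
  refine le_trans ?_ h1
  have : ‖u‖ = |w p| * ‖lift3 p‖ := by
    rw [norm_smul, Real.norm_eq_abs]
  rw [this, hw]
  have h2 : ((n:ℝ)^2) ≤ ‖lift3 p‖ := le_trans (le_abs_self _) (lift3_norm_ge p)
  calc (n : ℝ) = |1 / (n:ℝ)| * (n:ℝ)^2 := by
        rw [abs_of_pos (by positivity)]; field_simp
    _ ≤ |1 / (n:ℝ)| * ‖lift3 p‖ := by
        apply mul_le_mul_of_nonneg_left h2 (abs_nonneg _)

/-- instability of the unweighted linear construction `ω(p) = y - x`.
For the single-point diagrams `D_n = {(n², n² + 1/n)}` with multiplicity 1, the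
1-Wasserstein distance to the empty diagram is `1/(2n) → 0`, while the Hausdorff distance
between the lift zonoids tends to infinity; hence no stability constant exists. -/
theorem unweighted_construction_unstable :
    (∀ n : ℕ, 1 ≤ n →
      W1 ({((n : ℝ) ^ 2, (n : ℝ) ^ 2 + 1 / (n : ℝ))} : Finset (ℝ × ℝ)) (∅ : Finset (ℝ × ℝ))
          (fun _ => 1) (fun _ => 1)
        = 1 / (2 * (n : ℝ)))
    ∧ Tendsto (fun n : ℕ =>
        Metric.hausdorffDist
          (liftZonoid ({((n : ℝ) ^ 2, (n : ℝ) ^ 2 + 1 / (n : ℝ))} : Finset (ℝ × ℝ))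
            (fun p => (p.2 - p.1) * ((1 : ℕ) : ℝ)))
          (liftZonoid (∅ : Finset (ℝ × ℝ)) (fun p => (p.2 - p.1) * ((1 : ℕ) : ℝ))))
        atTop atTop
    ∧ ¬ ∃ Cst : ℝ, ∀ (D D' : Finset (ℝ × ℝ)) (a b : ℝ × ℝ → ℕ),
        (∀ p ∈ D, p.1 < p.2) → (∀ q ∈ D', q.1 < q.2) →
        (∀ p ∈ D, 0 < a p) → (∀ q ∈ D', 0 < b q) →
        Metric.hausdorffDist
            (liftZonoid D (fun p => (p.2 - p.1) * (a p : ℝ)))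
            (liftZonoid D' (fun q => (q.2 - q.1) * (b q : ℝ)))
          ≤ Cst * W1 D D' a b := by
  refine ⟨fun n hn => W1_single n hn, ?_, ?_⟩
  · refine tendsto_atTop_mono' atTop ?_ tendsto_natCast_atTop_atTop
    filter_upwards [eventually_ge_atTop 1] with n hn
    exact lower_bound n hn
  · rintro ⟨C, hC⟩
    set n : ℕ := ⌈C⌉₊ + 1 with hn_def
    have hn : 1 ≤ n := Nat.le_add_left 1 _
    have hn' : (0:ℝ) < n := by exact_mod_cast hn
    have hD : ∀ q ∈ ({((n : ℝ) ^ 2, (n : ℝ) ^ 2 + 1 / (n : ℝ))} : Finset (ℝ × ℝ)),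
        q.1 < q.2 := by
      intro q hq
      simp only [Finset.mem_singleton] at hq
      subst hq
      simp only
      have : 0 < 1 / (n:ℝ) := by positivity
      linarith
    have h := hC ({((n : ℝ) ^ 2, (n : ℝ) ^ 2 + 1 / (n : ℝ))} : Finset (ℝ × ℝ)) ∅
      (fun _ => 1) (fun _ => 1) hD (by simp) (fun _ _ => one_pos) (by simp)
    rw [W1_single n hn] at h
    have hlb := lower_bound n hn
    have hkey : (n : ℝ) ≤ C * (1 / (2 * (n:ℝ))) := le_trans hlb h
    have hCn : C ≤ (n : ℝ) := by
      have h1 : C ≤ (⌈C⌉₊ : ℝ) := Nat.le_ceil C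
      have h2 : ((⌈C⌉₊ : ℕ) : ℝ) ≤ (n : ℝ) := by exact_mod_cast Nat.le_succ _
      linarith
    rw [mul_one_div, le_div_iff₀ (by positivity : (0:ℝ) < 2 * (n:ℝ))] at hkey
    have hn1 : (1:ℝ) ≤ (n:ℝ) := by exact_mod_cast hn
    nlinarith [hkey, hCn, hn', hn1]
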